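/- Let A = 2 = {0,1} and R = {0^n 1^ω : n ≥ 0} ⊆ 2^ω (sequences of finitely many 0s followed by all 1s). Then the constant-zero ω-operation c_0 belongs to Pol^ω(R̄) but every φ ∈ Pol^ω_G(R) satisfies φ(1^ω) = 1; hence the local closure of Pol^ω_G(R) is strictly contained in Pol^ω(R̄). -/

import Mathlib

/-- For R = {0^n 1^ω : n ≥ 0} ⊆ 2^ω: the constant-zero ω-operation belongs to
Pol^ω(R̄), while every φ ∈ Pol^ω_G(R) satisfies φ(1^ω) = 1. -/
theorem stmt_15 :
    ((∀ m : ℕ → (ℕ → Bool),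
        (∀ j : ℕ, (fun i : ℕ => m i j) ∈
          {s : ℕ → Bool | ∀ d : Set ℕ, d.Finite →
            ∃ r ∈ {s : ℕ → Bool | ∃ n : ℕ, ∀ i, s i = decide (n ≤ i)}, Set.EqOn s r d}) →
        (fun _ : ℕ => (false : Bool)) ∈
          {s : ℕ → Bool | ∀ d : Set ℕ, d.Finite →
            ∃ r ∈ {s : ℕ → Bool | ∃ n : ℕ, ∀ i, s i = decide (n ≤ i)}, Set.EqOn s r d}) ∧
     (∀ φ : (ℕ → Bool) → Bool,
        (∀ m : ℕ → (ℕ → Bool),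
          (∀ j : ℕ, (fun i : ℕ => m i j) ∈ {s : ℕ → Bool | ∃ n : ℕ, ∀ i, s i = decide (n ≤ i)}) →
          (fun i : ℕ => φ (m i)) ∈ {s : ℕ → Bool | ∃ n : ℕ, ∀ i, s i = decide (n ≤ i)}) →
        φ (fun _ => true) = true)) := by
  constructor
  · intro m _ d hd
    obtain ⟨N, hN⟩ := hd.bddAbove
    refine ⟨fun i => decide (N + 1 ≤ i), ⟨N + 1, fun i => rfl⟩, fun i hi => ?_⟩
    have : i ≤ N := hN hi
    simp [(Nat.lt_of_le_of_lt this (Nat.lt_succ_self N) : i < N + 1).not_ge]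
  · intro φ h
    obtain ⟨n, hn⟩ := h (fun _ _ => true) (fun j => ⟨0, fun i => by simp⟩)
    have := hn n
    simpa using this
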